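/- Let X be a finite set with a distinguished element x₀ and Y a finite set. Let W assign to each x ∈ X a pmf W(·|x) on Y with W(y|x₀) > 0 for all y, let P̃ᴬ be a pmf on X with P̃ᴬ(x₀) = 0, and let Pᴮ be a pmf on X. For (μ₁,μ₂) ∈ ℝ² define P^{μ₁,μ₂} : X × Y → ℝ by P^{μ₁,μ₂}(x,y) = ((1−μ₁)(1−μ₂)·1{x = x₀} + (1−μ₁)·μ₂·P̃ᴬ(x) + μ₁·Pᴮ(x))·W(y|x), and let I(μ₁,μ₂) denote the mutual information of P^{μ₁,μ₂}. Then the map μ₁ ↦ I(μ₁, 0) has a derivative at μ₁ = 0, equal to ∑_{x∈X} Pᴮ(x)·D(W(·|x) ‖ W(·|x₀)). -/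

import Mathlib

open Real

/-- Kullback–Leibler divergence of finite-alphabet "distributions" `p`, `q`. -/
noncomputable def klDiv {Z : Type*} [Fintype Z] (p q : Z → ℝ) : ℝ :=
  ∑ z, p z * (Real.log (p z) - Real.log (q z))

/-- Mutual information of a joint function `P` on a product of finite alphabets. -/
noncomputable def mutualInfo {U Y : Type*} [Fintype U] [Fintype Y] (P : U → Y → ℝ) : ℝ :=
  ∑ u, ∑ y, P u y *
    (Real.log (P u y) - Real.log (∑ y', P u y') - Real.log (∑ u', P u' y))

theorem stmt_2 {X Y : Type*} [Fintype X] [Fintype Y] [DecidableEq X]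
    (x₀ : X) (W : X → Y → ℝ)
    (hW0 : ∀ x y, 0 ≤ W x y) (hW1 : ∀ x, ∑ y, W x y = 1)
    (hWpos : ∀ y, 0 < W x₀ y)
    (PtA PB : X → ℝ)
    (hPtA0 : ∀ x, 0 ≤ PtA x) (hPtA1 : ∑ x, PtA x = 1) (hPtAx0 : PtA x₀ = 0)
    (hPB0 : ∀ x, 0 ≤ PB x) (hPB1 : ∑ x, PB x = 1)
    (I : ℝ → ℝ → ℝ)
    (hI : ∀ μ₁ μ₂, I μ₁ μ₂ = mutualInfo (fun (x : X) (y : Y) =>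
      ((1 - μ₁) * (1 - μ₂) * (if x = x₀ then 1 else 0)
        + (1 - μ₁) * μ₂ * PtA x + μ₁ * PB x) * W x y)) :
    HasDerivAt (fun μ₁ => I μ₁ 0) (∑ x, PB x * klDiv (W x) (W x₀)) 0 := by
  classical
  set B : Y → ℝ := fun y => ∑ x, PB x * W x y with hB
  set F : ℝ → ℝ := fun μ => ∑ x, ∑ y,
    (((1 - μ) * (if x = x₀ then 1 else 0) + μ * PB x) * W x y) *
      (Real.log (W x y) - Real.log ((1 - μ) * W x₀ y + μ * B y)) with hFdef
  set d : X → Y → ℝ := fun x y =>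
    ((PB x - (if x = x₀ then 1 else 0)) * W x y) *
      (Real.log (W x y) - Real.log (W x₀ y)) +
    ((if x = x₀ then 1 else 0) * W x y) * (-((B y - W x₀ y) / W x₀ y)) with hd
  have key : (fun μ₁ => I μ₁ 0) = F := by
    funext μ
    rw [hI, mutualInfo]
    simp only [mul_zero, zero_mul, sub_zero, mul_one, add_zero]
    apply Finset.sum_congr rfl
    intro x _
    have hrow : (∑ y', ((1 - μ) * (if x = x₀ then 1 else 0) + μ * PB x) * W x y')
        = (1 - μ) * (if x = x₀ then 1 else 0) + μ * PB x := by
      rw [← Finset.mul_sum, hW1, mul_one]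
    apply Finset.sum_congr rfl
    intro y _
    have hcol : (∑ x', ((1 - μ) * (if x' = x₀ then 1 else 0) + μ * PB x') * W x' y)
        = (1 - μ) * W x₀ y + μ * B y := by
      simp only [add_mul, Finset.sum_add_distrib, mul_assoc, ite_mul, one_mul, zero_mul,
        mul_ite, mul_zero]
      rw [Finset.sum_ite_eq' Finset.univ x₀ (fun x' => (1-μ) * W x' y), ← Finset.mul_sum]
      simp [hB]
    rw [hrow, hcol]
    set p : ℝ := (1 - μ) * (if x = x₀ then 1 else 0) + μ * PB x
    by_cases hp : p = 0
    · simp [hp]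
    by_cases hw : W x y = 0
    · simp [hw]
    rw [Real.log_mul hp hw]
    ring
  rw [key]
  have hF : HasDerivAt F (∑ x, ∑ y, d x y) 0 := by
    apply HasDerivAt.fun_sum
    intro x _
    apply HasDerivAt.fun_sum
    intro y _
    set c : ℝ := (if x = x₀ then 1 else 0) with hc
    have ha : HasDerivAt (fun μ : ℝ => ((1 - μ) * c + μ * PB x) * W x y)
        ((PB x - c) * W x y) 0 := by
      have h1 : HasDerivAt (fun μ : ℝ => (c + (PB x - c) * μ) * W x y)
          ((PB x - c) * 1 * W x y) 0 :=
        (((hasDerivAt_id (0:ℝ)).const_mul (PB x - c)).const_add c).mul_const (W x y)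
      have heq : (fun μ : ℝ => ((1 - μ) * c + μ * PB x) * W x y)
          = (fun μ : ℝ => (c + (PB x - c) * μ) * W x y) := by funext μ; ring
      rw [heq]
      simpa using h1
    have hlpos : (1 - (0:ℝ)) * W x₀ y + 0 * B y ≠ 0 := by
      have := hWpos y; norm_num; linarith
    have hl : HasDerivAt (fun μ : ℝ => (1 - μ) * W x₀ y + μ * B y) (B y - W x₀ y) 0 := by
      have h1 : HasDerivAt (fun μ : ℝ => W x₀ y + (B y - W x₀ y) * μ)
          ((B y - W x₀ y) * 1) 0 :=
        ((hasDerivAt_id (0:ℝ)).const_mul (B y - W x₀ y)).const_add (W x₀ y)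
      have heq : (fun μ : ℝ => (1 - μ) * W x₀ y + μ * B y)
          = (fun μ : ℝ => W x₀ y + (B y - W x₀ y) * μ) := by funext μ; ring
      rw [heq]; simpa using h1
    have hlog := hl.log hlpos
    have hg := hlog.const_sub (Real.log (W x y))
    have := ha.mul hg
    convert this using 1
    case e'_4 => rfl
    case e'_8 => rfl
    have h0 : (1 - (0:ℝ)) * W x₀ y + 0 * B y = W x₀ y := by ring
    rw [h0]
    simp only [hd]
    ring
  have hsum : (∑ x, ∑ y, d x y) = ∑ x, PB x * klDiv (W x) (W x₀) := by
    have inner : ∀ x, ∑ y, d x y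
        = (PB x - (if x = x₀ then 1 else 0)) * klDiv (W x) (W x₀)
          + (if x = x₀ then 1 else 0) * ∑ y, W x y * (-((B y - W x₀ y) / W x₀ y)) := by
      intro x
      rw [klDiv, Finset.mul_sum, Finset.mul_sum, ← Finset.sum_add_distrib]
      exact Finset.sum_congr rfl fun y _ => by simp only [hd]; ring
    rw [Finset.sum_congr rfl fun x _ => inner x]
    rw [Finset.sum_add_distrib]
    have hK0 : klDiv (W x₀) (W x₀) = 0 := by simp [klDiv]
    have hBsum : ∑ y, B y = 1 := by
      simp only [hB]
      rw [Finset.sum_comm]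
      have : ∀ x : X, (∑ y, PB x * W x y) = PB x := by
        intro x; rw [← Finset.mul_sum, hW1, mul_one]
      rw [Finset.sum_congr rfl fun x _ => this x, hPB1]
    have h2 : (∑ x, (if x = x₀ then 1 else 0) *
        ∑ y, W x y * (-((B y - W x₀ y) / W x₀ y))) = 0 := by
      simp only [ite_mul, one_mul, zero_mul, Finset.sum_ite_eq', Finset.mem_univ, if_true]
      have hterm : ∀ y, W x₀ y * (-((B y - W x₀ y) / W x₀ y)) = W x₀ y - B y := by
        intro y
        have h0 := (hWpos y).ne'
        field_simp
        ring
      rw [Finset.sum_congr rfl fun y _ => hterm y, Finset.sum_sub_distrib, hW1, hBsum]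
      ring
    rw [h2, add_zero]
    simp only [sub_mul, Finset.sum_sub_distrib, ite_mul, one_mul, zero_mul,
      Finset.sum_ite_eq', Finset.mem_univ, if_true, hK0, sub_zero]
  rw [← hsum]
  exact hF
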